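/- Let S = L·R be the concatenation of two nonempty strings L and R such that the set of characters occurring in L is disjoint from the set of characters occurring in R. Then slp(S) ≥ slp(L) + slp(R). -/

import Mathlib

/-- The terminal (if any) denoted by a grammar symbol, as a finset. -/
def symTerms {n : ℕ} {α : Type} [DecidableEq α] : (Fin n ⊕ α) → Finset α
  | Sum.inr a => {a}
  | Sum.inl _ => ∅

/-- A straight-line program over the alphabet `α`: every nonterminal `i` has exactly
one production `rhs i`, whose right-hand side consists of exactly two symbols
(terminals or nonterminals); acyclicity is enforced by requiring the nonterminals
on the right-hand side of `i` to be smaller than `i` (a topological order). -/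
structure SLP (α : Type) where
  num : ℕ
  rhs : Fin num → (Fin num ⊕ α) × (Fin num ⊕ α)
  start : Fin num ⊕ α
  wf : ∀ i j : Fin num, ((rhs i).1 = Sum.inl j → j < i) ∧ ((rhs i).2 = Sum.inl j → j < i)

/-- The string derived from nonterminal `i` of the SLP `G`. -/
def SLP.expand {α : Type} (G : SLP α) (i : Fin G.num) : List α :=
  (match h : (G.rhs i).1 with
   | Sum.inl j => G.expand j
   | Sum.inr a => [a]) ++
  (match h : (G.rhs i).2 with
   | Sum.inl j => G.expand j
   | Sum.inr a => [a])
termination_by i.val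
decreasing_by
  · exact (G.wf i j).1 h
  · exact (G.wf i j).2 h

/-- The string derived from a grammar symbol of the SLP `G`. -/
def SLP.expandSym {α : Type} (G : SLP α) : (Fin G.num ⊕ α) → List α
  | Sum.inl i => G.expand i
  | Sum.inr a => [a]

/-- `G` generates `S`: the start symbol of `G` derives exactly `S`. -/
def SLP.Generates {α : Type} (G : SLP α) (S : List α) : Prop :=
  G.expandSym G.start = S

/-- The terminals occurring in the SLP `G`. -/
def SLP.terminals {α : Type} [DecidableEq α] (G : SLP α) : Finset α :=
  ((Finset.univ : Finset (Fin G.num)).biUnion fun i =>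
    symTerms (G.rhs i).1 ∪ symTerms (G.rhs i).2) ∪ symTerms G.start

/-- The size of the SLP `G`: its total number of symbols (terminals plus nonterminals). -/
def SLP.size {α : Type} [DecidableEq α] (G : SLP α) : ℕ :=
  G.num + G.terminals.card

/-- `slp(S)`: the minimum total number of symbols over all SLPs generating `S`. -/
noncomputable def slp {α : Type} [DecidableEq α] (S : List α) : ℕ :=
  sInf { m | ∃ G : SLP α, G.Generates S ∧ G.size = m }


namespace SLPAux

open SLP

theorem expand_def {α : Type} (G : SLP α) (i : Fin G.num) :
    G.expand i = G.expandSym (G.rhs i).1 ++ G.expandSym (G.rhs i).2 := by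
  rw [SLP.expand]
  rcases h1 : (G.rhs i).1 with j | a <;> rcases h2 : (G.rhs i).2 with k | b <;>
    simp [SLP.expandSym, h1, h2]

theorem expand_ne_nil {α : Type} (G : SLP α) (i : Fin G.num) : G.expand i ≠ [] := by
  rw [expand_def G i]
  rcases hs : (G.rhs i).1 with j | a
  · have hne := expand_ne_nil G j
    simp [SLP.expandSym, hne]
  · simp [SLP.expandSym]
termination_by i.val
decreasing_by exact (G.wf i j).1 hs

theorem expandSym_ne_nil {α : Type} (G : SLP α) (s : Fin G.num ⊕ α) : G.expandSym s ≠ [] := by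
  rcases s with j | a
  · exact expand_ne_nil G j
  · simp [SLP.expandSym]

theorem mem_terminals_of_mem_expand {α : Type} [DecidableEq α] (G : SLP α) (i : Fin G.num)
    (a : α) (ha : a ∈ G.expand i) : a ∈ G.terminals := by
  rw [expand_def G i] at ha
  rcases List.mem_append.mp ha with h | h
  · rcases hs : (G.rhs i).1 with j | b
    · rw [hs] at h; exact mem_terminals_of_mem_expand G j a h
    · rw [hs] at h; simp [SLP.expandSym] at h
      subst h
      refine Finset.mem_union_left _ (Finset.mem_biUnion.mpr ⟨i, Finset.mem_univ i, ?_⟩)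
      exact Finset.mem_union_left _ (by rw [hs]; simp [symTerms])
  · rcases hs : (G.rhs i).2 with j | b
    · rw [hs] at h; exact mem_terminals_of_mem_expand G j a h
    · rw [hs] at h; simp [SLP.expandSym] at h
      subst h
      refine Finset.mem_union_left _ (Finset.mem_biUnion.mpr ⟨i, Finset.mem_univ i, ?_⟩)
      exact Finset.mem_union_right _ (by rw [hs]; simp [symTerms])
termination_by i.val
decreasing_by
  · exact (G.wf i j).1 hs
  · exact (G.wf i j).2 hs

theorem mem_terminals_of_mem_expandSym {α : Type} [DecidableEq α] (G : SLP α)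
    (s : Fin G.num ⊕ α) (a : α) (ha : a ∈ G.expandSym s) (hs : s = G.start) :
    a ∈ G.terminals := by
  rcases s with j | b
  · exact mem_terminals_of_mem_expand G j a ha
  · simp [SLP.expandSym] at ha; subst ha
    exact Finset.mem_union_right _ (by rw [← hs]; simp [symTerms])

end SLPAux

namespace SLPAux

theorem chain {α : Type} (G : SLP α) (CL CR : α → Prop) (i : Fin G.num) :
    ∀ (u v : List α), G.expand i = u ++ v → u ≠ [] → v ≠ [] →
    (∀ a ∈ u, CL a) → (∀ a ∈ v, CR a) →
    ∃ (sL sR : List (Fin G.num ⊕ α)) (M : Finset (Fin G.num)),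
      (sL.map G.expandSym).flatten = u ∧
      (sR.map G.expandSym).flatten = v ∧
      (∀ s ∈ sL, ∀ a ∈ G.expandSym s, CL a) ∧
      (∀ s ∈ sR, ∀ a ∈ G.expandSym s, CR a) ∧
      (∀ j ∈ M, j ≤ i) ∧
      (∀ j ∈ M, (∃ a ∈ G.expand j, CL a) ∧ (∃ a ∈ G.expand j, CR a)) ∧
      sL.length + sR.length = M.card + 1 := by
  intro u v hexp hu hv hCu hCv
  have hmix : (∃ a ∈ G.expand i, CL a) ∧ (∃ a ∈ G.expand i, CR a) := by
    constructor
    · obtain ⟨a, ha⟩ := List.exists_mem_of_ne_nil u hu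
      exact ⟨a, by rw [hexp]; exact List.mem_append_left _ ha, hCu a ha⟩
    · obtain ⟨a, ha⟩ := List.exists_mem_of_ne_nil v hv
      exact ⟨a, by rw [hexp]; exact List.mem_append_right _ ha, hCv a ha⟩
  have hsplit : G.expandSym (G.rhs i).1 ++ G.expandSym (G.rhs i).2 = u ++ v := by
    rw [← expand_def, hexp]
  rcases List.append_eq_append_iff.mp hsplit with ⟨w, hw1, hw2⟩ | ⟨w, hw1, hw2⟩
  · -- u = e1 ++ w, e2 = w ++ v
    by_cases hwnil : w = []
    · subst hwnil
      simp only [List.append_nil, List.nil_append] at hw1 hw2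
      refine ⟨[(G.rhs i).1], [(G.rhs i).2], {i}, ?_, ?_, ?_, ?_, ?_, ?_, ?_⟩
      · simp [hw1]
      · simp [hw2]
      · intro s hs a ha; simp at hs; subst hs; exact hCu a (hw1 ▸ ha)
      · intro s hs a ha; simp at hs; subst hs; exact hCv a (hw2 ▸ ha)
      · intro j hj; simp at hj; exact le_of_eq hj
      · intro j hj; simp at hj; subst hj; exact hmix
      · simp
    · have hwCL : ∀ a ∈ w, CL a := fun a ha => hCu a (by rw [hw1]; exact List.mem_append_right _ ha)
      rcases hr2 : (G.rhs i).2 with j | b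
      · rw [hr2] at hw2
        have hj : G.expand j = w ++ v := hw2
        have hlt : j < i := (G.wf i j).2 hr2
        obtain ⟨sL', sR', M', h1, h2, h3, h4, h5, h6, h7⟩ :=
          chain G CL CR j w v hj hwnil hv hwCL hCv
        have hiM : i ∉ M' := fun h => absurd (lt_of_le_of_lt (h5 i h) hlt) (lt_irrefl i)
        refine ⟨(G.rhs i).1 :: sL', sR', insert i M', ?_, h2, ?_, h4, ?_, ?_, ?_⟩
        · simp [h1, ← hw1]
        · intro s hs a ha
          rcases List.mem_cons.mp hs with h | h
          · subst h; exact hCu a (by rw [hw1]; exact List.mem_append_left _ ha)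
          · exact h3 s h a ha
        · intro x hx
          rcases Finset.mem_insert.mp hx with h | h
          · exact le_of_eq h
          · exact le_trans (h5 x h) (le_of_lt hlt)
        · intro x hx
          rcases Finset.mem_insert.mp hx with h | h
          · subst h; exact hmix
          · exact h6 x h
        · rw [Finset.card_insert_of_notMem hiM]; simp at h7 ⊢; omega
      · rw [hr2] at hw2
        simp [SLP.expandSym] at hw2
        exfalso
        have hlen := congrArg List.length hw2
        simp [List.length_append] at hlen
        have hw' : w.length ≠ 0 := fun h => hwnil (List.length_eq_zero_iff.mp h)
        have hv' : v.length ≠ 0 := fun h => hv (List.length_eq_zero_iff.mp h)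
        omega
  · -- e1 = u ++ w, v = w ++ e2
    by_cases hwnil : w = []
    · subst hwnil
      simp only [List.append_nil, List.nil_append] at hw1 hw2
      refine ⟨[(G.rhs i).1], [(G.rhs i).2], {i}, ?_, ?_, ?_, ?_, ?_, ?_, ?_⟩
      · simp [hw1]
      · simp [hw2]
      · intro s hs a ha; simp at hs; subst hs; exact hCu a (hw1 ▸ ha)
      · intro s hs a ha; simp at hs; subst hs; exact hCv a (by rw [hw2]; exact ha)
      · intro j hj; simp at hj; exact le_of_eq hj
      · intro j hj; simp at hj; subst hj; exact hmix
      · simp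
    · have hwCR : ∀ a ∈ w, CR a := fun a ha => hCv a (by rw [hw2]; exact List.mem_append_left _ ha)
      rcases hr1 : (G.rhs i).1 with j | b
      · rw [hr1] at hw1
        have hj : G.expand j = u ++ w := hw1
        have hlt : j < i := (G.wf i j).1 hr1
        obtain ⟨sL', sR', M', h1, h2, h3, h4, h5, h6, h7⟩ :=
          chain G CL CR j u w hj hu hwnil hCu hwCR
        have hiM : i ∉ M' := fun h => absurd (lt_of_le_of_lt (h5 i h) hlt) (lt_irrefl i)
        refine ⟨sL', sR' ++ [(G.rhs i).2], insert i M', h1, ?_, h3, ?_, ?_, ?_, ?_⟩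
        · simp [h2, hw2]
        · intro s hs a ha
          rcases List.mem_append.mp hs with h | h
          · exact h4 s h a ha
          · simp at h; subst h; exact hCv a (by rw [hw2]; exact List.mem_append_right _ ha)
        · intro x hx
          rcases Finset.mem_insert.mp hx with h | h
          · exact le_of_eq h
          · exact le_trans (h5 x h) (le_of_lt hlt)
        · intro x hx
          rcases Finset.mem_insert.mp hx with h | h
          · subst h; exact hmix
          · exact h6 x h
        · rw [Finset.card_insert_of_notMem hiM]; simp at h7 ⊢; omega
      · rw [hr1] at hw1
        simp [SLP.expandSym] at hw1
        exfalso
        have hlen := congrArg List.length hw1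
        simp [List.length_append] at hlen
        have hu' : u.length ≠ 0 := fun h => hu (List.length_eq_zero_iff.mp h)
        have hw' : w.length ≠ 0 := fun h => hwnil (List.length_eq_zero_iff.mp h)
        omega
termination_by i.val
decreasing_by
  · exact hlt
  · exact hlt

end SLPAux

namespace SLPAux

variable {α : Type} [DecidableEq α]

/-- Nonterminals of `G` all of whose expansion characters lie in `chL`. -/
def pureSet (G : SLP α) (chL : Finset α) : Finset (Fin G.num) :=
  Finset.univ.filter (fun p => ∀ a ∈ G.expand p, a ∈ chL)

def combNum (G : SLP α) (chL : Finset α) (m : ℕ) : ℕ :=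
  (pureSet G chL).card + (m - 1)

noncomputable def emb (G : SLP α) (chL : Finset α) :
    Fin (pureSet G chL).card ≃o {x // x ∈ pureSet G chL} :=
  (pureSet G chL).orderIsoOfFin rfl

noncomputable def mapSym (G : SLP α) (chL : Finset α) (m : ℕ) (a₀ : α)
    (s : Fin G.num ⊕ α) : Fin (combNum G chL m) ⊕ α :=
  match s with
  | .inr a => .inr a
  | .inl j =>
    if h : j ∈ pureSet G chL then
      .inl (Fin.castLE (Nat.le_add_right _ _) ((emb G chL).symm ⟨j, h⟩))
    else .inr a₀

noncomputable def combRhs (G : SLP α) (chL : Finset α) (σs : List (Fin G.num ⊕ α)) (a₀ : α)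
    (t : Fin (combNum G chL σs.length)) :
    (Fin (combNum G chL σs.length) ⊕ α) × (Fin (combNum G chL σs.length) ⊕ α) :=
  if ht : t.val < (pureSet G chL).card then
    (mapSym G chL σs.length a₀ (G.rhs ((emb G chL) ⟨t.val, ht⟩).val).1,
     mapSym G chL σs.length a₀ (G.rhs ((emb G chL) ⟨t.val, ht⟩).val).2)
  else
    (mapSym G chL σs.length a₀ (σs.getD (σs.length - 2 - (t.val - (pureSet G chL).card)) (.inr a₀)),
     if t.val - (pureSet G chL).card = 0 then
       mapSym G chL σs.length a₀ (σs.getD (σs.length - 1) (.inr a₀))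
     else
       .inl ⟨(pureSet G chL).card + (t.val - (pureSet G chL).card - 1), by
         have h2 := t.isLt
         simp only [combNum] at h2 ⊢
         omega⟩)

noncomputable def combStart (G : SLP α) (chL : Finset α) (σs : List (Fin G.num ⊕ α)) (a₀ : α) :
    Fin (combNum G chL σs.length) ⊕ α :=
  if h : σs.length ≤ 1 then mapSym G chL σs.length a₀ (σs.getD 0 (.inr a₀))
  else .inl ⟨(pureSet G chL).card + (σs.length - 2), by simp only [combNum]; omega⟩

theorem mapSym_inl_spec (G : SLP α) (chL : Finset α) (m : ℕ) (a₀ : α)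
    (s : Fin G.num ⊕ α) (j : Fin (combNum G chL m))
    (h : mapSym G chL m a₀ s = .inl j) :
    ∃ (q : Fin G.num) (hq : q ∈ pureSet G chL), s = .inl q ∧
      j = Fin.castLE (Nat.le_add_right _ _) ((emb G chL).symm ⟨q, hq⟩) := by
  rcases s with q | a
  · by_cases hq : q ∈ pureSet G chL
    · refine ⟨q, hq, rfl, ?_⟩
      simp [mapSym, hq] at h
      exact h.symm
    · simp [mapSym, hq] at h
  · simp [mapSym] at h

theorem mapSym_inl_lt (G : SLP α) (chL : Finset α) (m : ℕ) (a₀ : α)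
    (s : Fin G.num ⊕ α) (j : Fin (combNum G chL m))
    (h : mapSym G chL m a₀ s = .inl j) : j.val < (pureSet G chL).card := by
  obtain ⟨q, hq, -, hj⟩ := mapSym_inl_spec G chL m a₀ s j h
  subst hj
  simp [Fin.castLE]

theorem combWf (G : SLP α) (chL : Finset α) (σs : List (Fin G.num ⊕ α)) (a₀ : α) :
    ∀ t j, ((combRhs G chL σs a₀ t).1 = Sum.inl j → j < t) ∧
           ((combRhs G chL σs a₀ t).2 = Sum.inl j → j < t) := by
  intro t j
  unfold combRhs
  by_cases ht : t.val < (pureSet G chL).card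
  · simp only [ht, dif_pos]
    set q := ((emb G chL) ⟨t.val, ht⟩).val with hqdef
    have hq : q ∈ pureSet G chL := ((emb G chL) ⟨t.val, ht⟩).2
    constructor
    · intro h
      obtain ⟨q', hq', hs, hje⟩ := mapSym_inl_spec G chL σs.length a₀ _ j h
      have hlt : q' < q := (G.wf q q').1 hs
      have : (emb G chL).symm ⟨q', hq'⟩ < (emb G chL).symm ⟨q, hq⟩ :=
        (emb G chL).symm.strictMono (by exact hlt)
      have he : (emb G chL).symm ⟨q, hq⟩ = ⟨t.val, ht⟩ := by
        simp [hqdef]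
      rw [he] at this
      subst hje
      exact Fin.lt_def.mpr (by simpa using Fin.lt_def.mp this)
    · intro h
      obtain ⟨q', hq', hs, hje⟩ := mapSym_inl_spec G chL σs.length a₀ _ j h
      have hlt : q' < q := (G.wf q q').2 hs
      have : (emb G chL).symm ⟨q', hq'⟩ < (emb G chL).symm ⟨q, hq⟩ :=
        (emb G chL).symm.strictMono (by exact hlt)
      have he : (emb G chL).symm ⟨q, hq⟩ = ⟨t.val, ht⟩ := by
        simp [hqdef]
      rw [he] at this
      subst hje
      exact Fin.lt_def.mpr (by simpa using Fin.lt_def.mp this)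
  · simp only [ht, dif_neg]
    constructor
    · intro h
      have := mapSym_inl_lt G chL σs.length a₀ _ j h
      exact Fin.lt_def.mpr (by omega)
    · by_cases hr : t.val - (pureSet G chL).card = 0
      · simp only [hr, if_pos]
        intro h
        have := mapSym_inl_lt G chL σs.length a₀ _ j h
        exact Fin.lt_def.mpr (by omega)
      · simp only [hr, if_neg]
        intro h
        have : j = ⟨(pureSet G chL).card + (t.val - (pureSet G chL).card - 1), _⟩ :=
          Sum.inl.inj h.symm
        have hj : j.val = (pureSet G chL).card + (t.val - (pureSet G chL).card - 1) := by
          rw [this]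
        exact Fin.lt_def.mpr (by omega)

noncomputable def combSLP (G : SLP α) (chL : Finset α) (σs : List (Fin G.num ⊕ α)) (a₀ : α) :
    SLP α :=
  ⟨combNum G chL σs.length, combRhs G chL σs a₀, combStart G chL σs a₀, combWf G chL σs a₀⟩

end SLPAux

namespace SLPAux

variable {α : Type} [DecidableEq α]

theorem mem_pureSet_iff (G : SLP α) (chL : Finset α) (q : Fin G.num) :
    q ∈ pureSet G chL ↔ ∀ a ∈ G.expand q, a ∈ chL := by
  simp [pureSet]

theorem pure_rhs1 (G : SLP α) (chL : Finset α) (q : Fin G.num) (hq : q ∈ pureSet G chL) :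
    ∀ a ∈ G.expandSym (G.rhs q).1, a ∈ chL := by
  intro a ha
  exact (mem_pureSet_iff G chL q).mp hq a (by rw [expand_def]; exact List.mem_append_left _ ha)

theorem pure_rhs2 (G : SLP α) (chL : Finset α) (q : Fin G.num) (hq : q ∈ pureSet G chL) :
    ∀ a ∈ G.expandSym (G.rhs q).2, a ∈ chL := by
  intro a ha
  exact (mem_pureSet_iff G chL q).mp hq a (by rw [expand_def]; exact List.mem_append_right _ ha)

theorem pure_inl (G : SLP α) (chL : Finset α) (j : Fin G.num)
    (h : ∀ a ∈ G.expandSym (Sum.inl j), a ∈ chL) : j ∈ pureSet G chL :=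
  (mem_pureSet_iff G chL j).mpr (fun a ha => h a (by exact ha))

theorem comb_expand_old (G : SLP α) (chL : Finset α) (σs : List (Fin G.num ⊕ α)) (a₀ : α)
    (t : Fin (combNum G chL σs.length)) (ht : t.val < (pureSet G chL).card) :
    (combSLP G chL σs a₀).expand t = G.expand ((emb G chL) ⟨t.val, ht⟩).val := by
  set q : Fin G.num := ((emb G chL) ⟨t.val, ht⟩).val with hqdef
  have hq : q ∈ pureSet G chL := ((emb G chL) ⟨t.val, ht⟩).2
  have hrhs : (combSLP G chL σs a₀).rhs t =
      (mapSym G chL σs.length a₀ (G.rhs q).1, mapSym G chL σs.length a₀ (G.rhs q).2) := by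
    show combRhs G chL σs a₀ t = _
    rw [combRhs, dif_pos ht]
  rw [expand_def (combSLP G chL σs a₀) t, expand_def G q, hrhs]
  congr 1
  · rcases hs : (G.rhs q).1 with j | a
    · have hj : j ∈ pureSet G chL :=
        pure_inl G chL j (by rw [← hs]; exact pure_rhs1 G chL q hq)
      have hmap : mapSym G chL σs.length a₀ (Sum.inl j) =
          Sum.inl (Fin.castLE (Nat.le_add_right _ _) ((emb G chL).symm ⟨j, hj⟩)) := by
        simp [mapSym, hj]; rfl
      rw [hmap]
      show (combSLP G chL σs a₀).expand _ = G.expand j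
      have ht' : (Fin.castLE (Nat.le_add_right _ _) ((emb G chL).symm ⟨j, hj⟩) :
          Fin (combNum G chL σs.length)).val < (pureSet G chL).card := by
        simp [Fin.castLE]
      erw [comb_expand_old G chL σs a₀ _ ht']
      congr 1
      have : (⟨(Fin.castLE (Nat.le_add_right _ _) ((emb G chL).symm ⟨j, hj⟩) :
          Fin (combNum G chL σs.length)).val, ht'⟩ : Fin (pureSet G chL).card) =
          (emb G chL).symm ⟨j, hj⟩ := by
        apply Fin.ext; simp [Fin.castLE]
      rw [this]
      simp
    · simp [mapSym, SLP.expandSym]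
  · rcases hs : (G.rhs q).2 with j | a
    · have hj : j ∈ pureSet G chL :=
        pure_inl G chL j (by rw [← hs]; exact pure_rhs2 G chL q hq)
      have hmap : mapSym G chL σs.length a₀ (Sum.inl j) =
          Sum.inl (Fin.castLE (Nat.le_add_right _ _) ((emb G chL).symm ⟨j, hj⟩)) := by
        simp [mapSym, hj]; rfl
      rw [hmap]
      show (combSLP G chL σs a₀).expand _ = G.expand j
      have ht' : (Fin.castLE (Nat.le_add_right _ _) ((emb G chL).symm ⟨j, hj⟩) :
          Fin (combNum G chL σs.length)).val < (pureSet G chL).card := by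
        simp [Fin.castLE]
      erw [comb_expand_old G chL σs a₀ _ ht']
      congr 1
      have : (⟨(Fin.castLE (Nat.le_add_right _ _) ((emb G chL).symm ⟨j, hj⟩) :
          Fin (combNum G chL σs.length)).val, ht'⟩ : Fin (pureSet G chL).card) =
          (emb G chL).symm ⟨j, hj⟩ := by
        apply Fin.ext; simp [Fin.castLE]
      rw [this]
      simp
    · simp [mapSym, SLP.expandSym]
termination_by t.val
decreasing_by
  · show ((emb G chL).symm ⟨j, hj⟩).val < t.val
    have hlt : j < q := (G.wf q j).1 hs
    have : (emb G chL).symm ⟨j, hj⟩ < (emb G chL).symm ⟨q, hq⟩ :=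
      (emb G chL).symm.strictMono (by exact hlt)
    have he : (emb G chL).symm ⟨q, hq⟩ = ⟨t.val, ht⟩ := by simp [hqdef]
    rw [he] at this
    simpa using Fin.lt_def.mp this
  · show ((emb G chL).symm ⟨j, hj⟩).val < t.val
    have hlt : j < q := (G.wf q j).2 hs
    have : (emb G chL).symm ⟨j, hj⟩ < (emb G chL).symm ⟨q, hq⟩ :=
      (emb G chL).symm.strictMono (by exact hlt)
    have he : (emb G chL).symm ⟨q, hq⟩ = ⟨t.val, ht⟩ := by simp [hqdef]
    rw [he] at this
    simpa using Fin.lt_def.mp this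

theorem expandSym_mapSym (G : SLP α) (chL : Finset α) (σs : List (Fin G.num ⊕ α)) (a₀ : α)
    (s : Fin G.num ⊕ α) (hs : ∀ a ∈ G.expandSym s, a ∈ chL) :
    (combSLP G chL σs a₀).expandSym (mapSym G chL σs.length a₀ s) = G.expandSym s := by
  rcases s with j | a
  · have hj : j ∈ pureSet G chL := pure_inl G chL j hs
    have hmap : mapSym G chL σs.length a₀ (Sum.inl j) =
        Sum.inl (Fin.castLE (Nat.le_add_right _ _) ((emb G chL).symm ⟨j, hj⟩)) := by
      simp [mapSym, hj]; rfl
    rw [hmap]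
    show (combSLP G chL σs a₀).expand _ = G.expand j
    have ht' : (Fin.castLE (Nat.le_add_right _ _) ((emb G chL).symm ⟨j, hj⟩) :
        Fin (combNum G chL σs.length)).val < (pureSet G chL).card := by
      simp [Fin.castLE]
    erw [comb_expand_old G chL σs a₀ _ ht']
    congr 1
    have : (⟨(Fin.castLE (Nat.le_add_right _ _) ((emb G chL).symm ⟨j, hj⟩) :
        Fin (combNum G chL σs.length)).val, ht'⟩ : Fin (pureSet G chL).card) =
        (emb G chL).symm ⟨j, hj⟩ := by
      apply Fin.ext; simp [Fin.castLE]
    rw [this]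
    simp
  · simp [mapSym, SLP.expandSym]

end SLPAux

namespace SLPAux

variable {α : Type} [DecidableEq α]

theorem comb_expand_comb (G : SLP α) (chL : Finset α) (σs : List (Fin G.num ⊕ α)) (a₀ : α)
    (hpure : ∀ s ∈ σs, ∀ a ∈ G.expandSym s, a ∈ chL) :
    ∀ (r : ℕ) (hr : r < σs.length - 1),
    (combSLP G chL σs a₀).expand
      ⟨(pureSet G chL).card + r, by simp only [combSLP, combNum]; omega⟩ =
      ((σs.drop (σs.length - 2 - r)).map G.expandSym).flatten := by
  intro r
  induction r with
  | zero =>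
    intro hr
    have hm : 2 ≤ σs.length := by omega
    set p := (pureSet G chL).card with hp
    set t : Fin (combNum G chL σs.length) :=
      ⟨p + 0, by simp only [combNum]; omega⟩ with htdef
    have hrhs : (combSLP G chL σs a₀).rhs t =
        (mapSym G chL σs.length a₀ (σs.getD (σs.length - 2 - 0) (.inr a₀)),
         mapSym G chL σs.length a₀ (σs.getD (σs.length - 1) (.inr a₀))) := by
      show combRhs G chL σs a₀ t = _
      rw [combRhs, dif_neg (by simp [htdef, hp])]
      simp [htdef, hp]
    erw [expand_def, hrhs]
    have h1 : σs.length - 2 - 0 < σs.length := by omega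
    have h2 : σs.length - 1 < σs.length := by omega
    rw [List.getD_eq_getElem σs _ h1, List.getD_eq_getElem σs _ h2]
    rw [expandSym_mapSym G chL σs a₀ _ (hpure _ (List.getElem_mem h1)),
        expandSym_mapSym G chL σs a₀ _ (hpure _ (List.getElem_mem h2))]
    rw [List.drop_eq_getElem_cons h1]
    have h3 : σs.length - 2 - 0 + 1 = σs.length - 1 := by omega
    rw [h3, List.drop_eq_getElem_cons h2]
    have h4 : σs.length - 1 + 1 = σs.length := by omega
    rw [h4, List.drop_length]
    simp
  | succ r' ih =>
    intro hr
    have hm : 2 ≤ σs.length := by omega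
    let p := (pureSet G chL).card
    have hp : p = (pureSet G chL).card := rfl
    set t : Fin (combNum G chL σs.length) :=
      ⟨p + (r' + 1), by simp only [combNum]; omega⟩ with htdef
    have hrhs : (combSLP G chL σs a₀).rhs t =
        (mapSym G chL σs.length a₀ (σs.getD (σs.length - 2 - (r' + 1)) (.inr a₀)),
         Sum.inl ⟨p + r', by simp only [combSLP, combNum]; omega⟩) := by
      show combRhs G chL σs a₀ t = _
      rw [combRhs, dif_neg (by simp [htdef, hp])]
      have hval : t.val - p = r' + 1 := by simp [htdef]
      rw [if_neg (by omega)]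
      simp [← hp, hval]; rfl
    erw [expand_def, hrhs]
    have h1 : σs.length - 2 - (r' + 1) < σs.length := by omega
    rw [List.getD_eq_getElem σs _ h1]
    rw [expandSym_mapSym G chL σs a₀ _ (hpure _ (List.getElem_mem h1))]
    have hih := ih (by omega)
    have hsnd : (combSLP G chL σs a₀).expandSym
        (Sum.inl (⟨p + r', by simp only [combNum]; omega⟩ : Fin (combNum G chL σs.length))) =
        ((σs.drop (σs.length - 2 - r')).map G.expandSym).flatten := hih
    erw [hsnd]
    rw [List.drop_eq_getElem_cons h1]
    have h3 : σs.length - 2 - (r' + 1) + 1 = σs.length - 2 - r' := by omega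
    rw [h3]
    simp

theorem comb_generates (G : SLP α) (chL : Finset α) (σs : List (Fin G.num ⊕ α)) (a₀ : α)
    (hσ : σs ≠ []) (hpure : ∀ s ∈ σs, ∀ a ∈ G.expandSym s, a ∈ chL) :
    (combSLP G chL σs a₀).Generates ((σs.map G.expandSym).flatten) := by
  have hlen : 1 ≤ σs.length := List.length_pos_iff.mpr hσ
  show (combSLP G chL σs a₀).expandSym (combStart G chL σs a₀) = _
  rw [combStart]
  by_cases h1 : σs.length ≤ 1
  · rw [dif_pos h1]
    have hlen1 : σs.length = 1 := by omega
    have h0 : (0 : ℕ) < σs.length := by omega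
    rw [List.getD_eq_getElem σs _ h0]
    rw [expandSym_mapSym G chL σs a₀ _ (hpure _ (List.getElem_mem h0))]
    obtain ⟨s, hs⟩ := List.length_eq_one_iff.mp hlen1
    subst hs
    simp
  · rw [dif_neg h1]
    have := comb_expand_comb G chL σs a₀ hpure (σs.length - 2) (by omega)
    have h3 : σs.length - 2 - (σs.length - 2) = 0 := by omega
    rw [h3, List.drop_zero] at this
    exact this

theorem symTerms_mapSym_sub (G : SLP α) (chL : Finset α) (m : ℕ) (a₀ : α)
    (s : Fin G.num ⊕ α) (hs : ∀ a ∈ G.expandSym s, a ∈ chL) :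
    symTerms (mapSym G chL m a₀ s) ⊆ chL := by
  rcases s with j | a
  · have hj : j ∈ pureSet G chL := pure_inl G chL j hs
    simp [mapSym, hj, symTerms]
  · intro x hx
    simp [mapSym, symTerms] at hx
    subst hx
    exact hs x (by simp [SLP.expandSym])

theorem comb_terminals (G : SLP α) (chL : Finset α) (σs : List (Fin G.num ⊕ α)) (a₀ : α)
    (hσ : σs ≠ []) (hpure : ∀ s ∈ σs, ∀ a ∈ G.expandSym s, a ∈ chL) :
    (combSLP G chL σs a₀).terminals ⊆ chL := by
  have hlen : 1 ≤ σs.length := List.length_pos_iff.mpr hσ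
  intro a ha
  rw [SLP.terminals] at ha
  rcases Finset.mem_union.mp ha with h | h
  · obtain ⟨t, -, ht⟩ := Finset.mem_biUnion.mp h
    have hcases : a ∈ symTerms ((combSLP G chL σs a₀).rhs t).1 ∨
        a ∈ symTerms ((combSLP G chL σs a₀).rhs t).2 := Finset.mem_union.mp ht
    have hrhs : (combSLP G chL σs a₀).rhs t = combRhs G chL σs a₀ t := rfl
    rw [hrhs] at hcases
    unfold combRhs at hcases
    by_cases hto : t.val < (pureSet G chL).card
    · rw [dif_pos hto] at hcases
      set q := ((emb G chL) ⟨t.val, hto⟩).val with hqdef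
      have hq : q ∈ pureSet G chL := ((emb G chL) ⟨t.val, hto⟩).2
      rcases hcases with h | h
      · exact symTerms_mapSym_sub G chL σs.length a₀ _ (pure_rhs1 G chL q hq) h
      · exact symTerms_mapSym_sub G chL σs.length a₀ _ (pure_rhs2 G chL q hq) h
    · rw [dif_neg hto] at hcases
      have htlt : t.val < (pureSet G chL).card + (σs.length - 1) := by
        have := t.isLt
        simpa [combSLP, combNum] using this
      have hm : 2 ≤ σs.length := by omega
      rcases hcases with h | h
      · have h1 : σs.length - 2 - (t.val - (pureSet G chL).card) < σs.length := by omega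
        rw [List.getD_eq_getElem σs _ h1] at h
        exact symTerms_mapSym_sub G chL σs.length a₀ _ (hpure _ (List.getElem_mem h1)) h
      · by_cases hr : t.val - (pureSet G chL).card = 0
        · rw [if_pos hr] at h
          have h2 : σs.length - 1 < σs.length := by omega
          rw [List.getD_eq_getElem σs _ h2] at h
          exact symTerms_mapSym_sub G chL σs.length a₀ _ (hpure _ (List.getElem_mem h2)) h
        · rw [if_neg hr] at h
          simp [symTerms] at h
  · have hstart : (combSLP G chL σs a₀).start = combStart G chL σs a₀ := rfl
    rw [hstart, combStart] at h
    by_cases h1 : σs.length ≤ 1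
    · rw [dif_pos h1] at h
      have h0 : (0 : ℕ) < σs.length := by omega
      rw [List.getD_eq_getElem σs _ h0] at h
      exact symTerms_mapSym_sub G chL σs.length a₀ _ (hpure _ (List.getElem_mem h0)) h
    · rw [dif_neg h1] at h
      simp [symTerms] at h

theorem comb_exists (G : SLP α) (chL : Finset α) (σs : List (Fin G.num ⊕ α)) (a₀ : α)
    (hσ : σs ≠ []) (hpure : ∀ s ∈ σs, ∀ a ∈ G.expandSym s, a ∈ chL) :
    ∃ G' : SLP α, G'.Generates ((σs.map G.expandSym).flatten) ∧
      G'.num = (pureSet G chL).card + (σs.length - 1) ∧ G'.terminals ⊆ chL :=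
  ⟨combSLP G chL σs a₀, comb_generates G chL σs a₀ hσ hpure, rfl,
    comb_terminals G chL σs a₀ hσ hpure⟩

end SLPAux

namespace SLPAux

variable {α : Type} [DecidableEq α]

theorem join_singletons (w : List α) : (w.map (fun a => [a])).flatten = w := by
  induction w <;> simp_all

theorem exists_slp (w : List α) (hw : w ≠ []) : ∃ G : SLP α, G.Generates w := by
  obtain ⟨a₀, -⟩ := List.exists_mem_of_ne_nil w hw
  let G0 : SLP α := ⟨0, fun i => i.elim0, Sum.inr a₀, fun i => i.elim0⟩
  have hσ : (w.map Sum.inr : List (Fin G0.num ⊕ α)) ≠ [] := by simp [hw]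
  have hpure : ∀ s ∈ (w.map Sum.inr : List (Fin G0.num ⊕ α)),
      ∀ a ∈ G0.expandSym s, a ∈ w.toFinset := by
    intro s hs a ha
    simp only [List.mem_map] at hs
    obtain ⟨b, hb, rfl⟩ := hs
    simp only [SLP.expandSym, List.mem_singleton] at ha
    subst ha
    exact List.mem_toFinset.mpr hb
  obtain ⟨G, hgen, -, -⟩ := comb_exists G0 w.toFinset (w.map Sum.inr) a₀ hσ hpure
  refine ⟨G, ?_⟩
  have hj : ((w.map Sum.inr).map G0.expandSym).flatten = w := by
    rw [List.map_map]
    have h2 : (G0.expandSym ∘ Sum.inr : α → List α) = fun a => [a] := rfl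
    rw [h2]
    exact join_singletons w
  rwa [hj] at hgen

end SLPAux

theorem slp_append_ge' {α : Type} [DecidableEq α] (L R : List α)
    (hL : L ≠ []) (hR : R ≠ []) (hdisj : ∀ a ∈ L, a ∉ R) :
    slp L + slp R ≤ slp (L ++ R) := by
  classical
  open SLPAux in
  obtain ⟨a₀, ha₀⟩ := List.exists_mem_of_ne_nil L hL
  have hSne : { m | ∃ G : SLP α, G.Generates (L ++ R) ∧ G.size = m }.Nonempty := by
    obtain ⟨G, hG⟩ := SLPAux.exists_slp (L ++ R) (by simp [hL])
    exact ⟨G.size, G, hG, rfl⟩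
  obtain ⟨G, hGen, hGsize⟩ := Nat.sInf_mem hSne
  rcases hst : G.start with i0 | b
  case inr =>
    exfalso
    rw [SLP.Generates, hst] at hGen
    simp only [SLP.expandSym] at hGen
    have hlen := congrArg List.length hGen
    simp only [List.length_append, List.length_singleton] at hlen
    have hL' : L.length ≠ 0 := fun h => hL (List.length_eq_zero_iff.mp h)
    have hR' : R.length ≠ 0 := fun h => hR (List.length_eq_zero_iff.mp h)
    omega
  case inl =>
  rw [SLP.Generates, hst] at hGen
  have hexp : G.expand i0 = L ++ R := hGen
  obtain ⟨sL, sR, M, hjL, hjR, hpL, hpR, hMle, hMmix, hcount⟩ :=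
    SLPAux.chain G (· ∈ L) (· ∈ R) i0 L R hexp hL hR (fun a h => h) (fun a h => h)
  have hsLne : sL ≠ [] := by
    intro h; rw [h] at hjL; simp at hjL; exact hL hjL
  have hsRne : sR ≠ [] := by
    intro h; rw [h] at hjR; simp at hjR; exact hR hjR
  obtain ⟨Gl, hGlgen, hGlnum, hGlterm⟩ := SLPAux.comb_exists G L.toFinset sL a₀ hsLne
    (fun s hs a ha => List.mem_toFinset.mpr (hpL s hs a ha))
  obtain ⟨Gr, hGrgen, hGrnum, hGrterm⟩ := SLPAux.comb_exists G R.toFinset sR a₀ hsRne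
    (fun s hs a ha => List.mem_toFinset.mpr (hpR s hs a ha))
  have hslpL : slp L ≤ Gl.num + Gl.terminals.card := by
    have : Gl.Generates L := by rwa [hjL] at hGlgen
    exact Nat.sInf_le ⟨Gl, this, rfl⟩
  have hslpR : slp R ≤ Gr.num + Gr.terminals.card := by
    have : Gr.Generates R := by rwa [hjR] at hGrgen
    exact Nat.sInf_le ⟨Gr, this, rfl⟩
  -- cardinality of nonterminal classes
  have hdisj1 : Disjoint (SLPAux.pureSet G L.toFinset) (SLPAux.pureSet G R.toFinset) := by
    rw [Finset.disjoint_left]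
    intro q hq1 hq2
    obtain ⟨a, ha⟩ := List.exists_mem_of_ne_nil _ (SLPAux.expand_ne_nil G q)
    have h1 : a ∈ L := List.mem_toFinset.mp ((SLPAux.mem_pureSet_iff G _ q).mp hq1 a ha)
    have h2 : a ∈ R := List.mem_toFinset.mp ((SLPAux.mem_pureSet_iff G _ q).mp hq2 a ha)
    exact hdisj a h1 h2
  have hdisj2 : Disjoint M (SLPAux.pureSet G L.toFinset) := by
    rw [Finset.disjoint_left]
    intro q hq1 hq2
    obtain ⟨a, ha, haR⟩ := (hMmix q hq1).2
    have h1 : a ∈ L := List.mem_toFinset.mp ((SLPAux.mem_pureSet_iff G _ q).mp hq2 a ha)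
    exact hdisj a h1 haR
  have hdisj3 : Disjoint M (SLPAux.pureSet G R.toFinset) := by
    rw [Finset.disjoint_left]
    intro q hq1 hq2
    obtain ⟨a, ha, haL⟩ := (hMmix q hq1).1
    have h1 : a ∈ R := List.mem_toFinset.mp ((SLPAux.mem_pureSet_iff G _ q).mp hq2 a ha)
    exact hdisj a haL h1
  have hcards : (SLPAux.pureSet G L.toFinset).card + (SLPAux.pureSet G R.toFinset).card
      + M.card ≤ G.num := by
    have h1 := Finset.card_le_univ
      ((SLPAux.pureSet G L.toFinset ∪ SLPAux.pureSet G R.toFinset) ∪ M)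
    rw [Finset.card_union_of_disjoint
        (Finset.disjoint_union_left.mpr ⟨hdisj2.symm, hdisj3.symm⟩),
      Finset.card_union_of_disjoint hdisj1] at h1
    simpa using h1
  -- terminals
  have hTsubL : Gl.terminals ⊆ G.terminals := by
    intro a ha
    have haL : a ∈ L := List.mem_toFinset.mp (hGlterm ha)
    exact SLPAux.mem_terminals_of_mem_expand G i0 a
      (by rw [hexp]; exact List.mem_append_left _ haL)
  have hTsubR : Gr.terminals ⊆ G.terminals := by
    intro a ha
    have haR : a ∈ R := List.mem_toFinset.mp (hGrterm ha)
    exact SLPAux.mem_terminals_of_mem_expand G i0 a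
      (by rw [hexp]; exact List.mem_append_right _ haR)
  have hTdisj : Disjoint Gl.terminals Gr.terminals := by
    rw [Finset.disjoint_left]
    intro a ha1 ha2
    exact hdisj a (List.mem_toFinset.mp (hGlterm ha1)) (List.mem_toFinset.mp (hGrterm ha2))
  have hT : Gl.terminals.card + Gr.terminals.card ≤ G.terminals.card := by
    rw [← Finset.card_union_of_disjoint hTdisj]
    exact Finset.card_le_card (Finset.union_subset hTsubL hTsubR)
  have h1L : 1 ≤ sL.length := List.length_pos_iff.mpr hsLne
  have h1R : 1 ≤ sR.length := List.length_pos_iff.mpr hsRne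
  have hsize : G.num + G.terminals.card = slp (L ++ R) := hGsize
  omega


/-- If `S = L·R` where `L` and `R` are nonempty strings over disjoint sets of
characters, then `slp(S) ≥ slp(L) + slp(R)`. -/
theorem slp_append_ge {α : Type} [DecidableEq α] (L R : List α)
    (hL : L ≠ []) (hR : R ≠ []) (hdisj : ∀ a ∈ L, a ∉ R) :
    slp L + slp R ≤ slp (L ++ R) := slp_append_ge' L R hL hR hdisj
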